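/- A probabilistic language L : Σ* → [0,1] is commutative (i.e., invariant under all permutations of the letters of the input word) if and only if its syntactic convex monoid D Σ*/≈_L is commutative. -/

import Mathlib

/-- A finitely supported probability distribution on an arbitrary type. -/
def IsFinDist {A : Type*} (d : A → ℝ) : Prop :=
  (∀ a, 0 ≤ d a) ∧ (Function.support d).Finite ∧ HasSum d 1

/-- ∑ᵢ φ(vᵢ)·L(x vᵢ y). -/
noncomputable def ctxVal {A : Type*} (L : List A → ℝ) (φ : List A → ℝ) (x y : List A) : ℝ :=
  ∑' v : List A, φ v * L (x ++ v ++ y)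

/-- The syntactic congruence of a probabilistic language L. -/
def SynRel {A : Type*} (L : List A → ℝ) (φ ψ : List A → ℝ) : Prop :=
  ∀ x y : List A, ctxVal L φ x y = ctxVal L ψ x y

/-- Multiplication of distributions on the free monoid Σ*. -/
noncomputable def wconv {A : Type*} [DecidableEq A] (d e : List A → ℝ) : List A → ℝ :=
  fun w => ∑' p : List A × List A, if p.1 ++ p.2 = w then d p.1 * e p.2 else 0

lemma wconv_eq_sum {A : Type*} [DecidableEq A] (φ ψ : List A → ℝ)
    (sφ sψ : Finset (List A)) (hφ : Function.support φ ⊆ ↑sφ)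
    (hψ : Function.support ψ ⊆ ↑sψ) (v : List A) :
    wconv φ ψ v = ∑ p ∈ sφ ×ˢ sψ, if p.1 ++ p.2 = v then φ p.1 * ψ p.2 else 0 := by
  apply tsum_eq_sum
  intro p hp
  by_cases h : p.1 ++ p.2 = v
  · simp only [h, if_true]
    rw [Finset.mem_product] at hp
    push_neg at hp
    by_cases h1 : p.1 ∈ sφ
    · have h2 := hp h1
      have : ψ p.2 = 0 := Function.notMem_support.mp (fun hs => h2 (hψ hs))
      simp [this]
    · have : φ p.1 = 0 := Function.notMem_support.mp (fun hs => h1 (hφ hs))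
      simp [this]
  · simp [h]

lemma ctx_conv {A : Type*} [DecidableEq A] (L φ ψ : List A → ℝ)
    (sφ sψ : Finset (List A)) (hφ : Function.support φ ⊆ ↑sφ)
    (hψ : Function.support ψ ⊆ ↑sψ) (x y : List A) :
    ctxVal L (wconv φ ψ) x y =
      ∑ a ∈ sφ, ∑ b ∈ sψ, φ a * ψ b * L (x ++ (a ++ b) ++ y) := by
  set T := (sφ ×ˢ sψ).image (fun p => p.1 ++ p.2) with hT
  have key : ctxVal L (wconv φ ψ) x y
      = ∑ v ∈ T, wconv φ ψ v * L (x ++ v ++ y) := by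
    apply tsum_eq_sum
    intro v hv
    rw [wconv_eq_sum φ ψ sφ sψ hφ hψ]
    have : ∀ p ∈ sφ ×ˢ sψ, (if p.1 ++ p.2 = v then φ p.1 * ψ p.2 else 0) = 0 := by
      intro p hp
      have : p.1 ++ p.2 ≠ v := fun h => hv (Finset.mem_image.mpr ⟨p, hp, h⟩)
      simp [this]
    rw [Finset.sum_eq_zero this, zero_mul]
  rw [key]
  have step : ∀ v ∈ T, wconv φ ψ v * L (x ++ v ++ y)
      = ∑ p ∈ sφ ×ˢ sψ, if p.1 ++ p.2 = v then φ p.1 * ψ p.2 * L (x ++ v ++ y) else 0 := by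
    intro v _
    rw [wconv_eq_sum φ ψ sφ sψ hφ hψ, Finset.sum_mul]
    exact Finset.sum_congr rfl (fun p _ => by split_ifs <;> simp)
  rw [Finset.sum_congr rfl step, Finset.sum_comm, Finset.sum_product]
  apply Finset.sum_congr rfl; intro a ha
  apply Finset.sum_congr rfl; intro b hb
  have hmem : a ++ b ∈ T :=
    Finset.mem_image.mpr ⟨(a, b), Finset.mem_product.mpr ⟨ha, hb⟩, rfl⟩
  have fix : ∀ v ∈ T, (if a ++ b = v then φ a * ψ b * L (x ++ v ++ y) else 0)
      = if a ++ b = v then φ a * ψ b * L (x ++ (a ++ b) ++ y) else 0 := by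
    intro v _
    split_ifs with h
    · rw [h]
    · rfl
  rw [Finset.sum_congr rfl fix, Finset.sum_ite_eq T (a ++ b), if_pos hmem]

lemma dirac_supp {B : Type*} [DecidableEq B] (u : B) :
    Function.support (fun w => if w = u then (1:ℝ) else 0) ⊆ {u} := by
  intro w hw
  rcases eq_or_ne w u with h | h
  · simp [h]
  · simp [Function.mem_support, h] at hw

lemma dirac_fin {B : Type*} [DecidableEq B] (u : B) :
    IsFinDist (fun w => if w = u then (1:ℝ) else 0) := by
  refine ⟨fun a => by dsimp only; split_ifs <;> norm_num,
    (Set.finite_singleton u).subset (dirac_supp u), hasSum_ite_eq u 1⟩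

/-- A probabilistic language is commutative (invariant under permutations of the
    letters of the input) iff its syntactic convex monoid D Σ*/≈_L is
    commutative. -/
theorem commutative_lang_iff_commutative_synMonoid
    {A : Type*} [DecidableEq A] (L : List A → ℝ) :
    (∀ v w : List A, v.Perm w → L v = L w) ↔
    (∀ φ ψ : List A → ℝ, IsFinDist φ → IsFinDist ψ →
      SynRel L (wconv φ ψ) (wconv ψ φ)) := by
  constructor
  · intro hL φ ψ hφ hψ x y
    rw [ctx_conv L φ ψ hφ.2.1.toFinset hψ.2.1.toFinset (by simp) (by simp),
        ctx_conv L ψ φ hψ.2.1.toFinset hφ.2.1.toFinset (by simp) (by simp),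
        Finset.sum_comm]
    apply Finset.sum_congr rfl; intro b _
    apply Finset.sum_congr rfl; intro a _
    rw [mul_comm (φ a) (ψ b)]
    congr 1
    apply hL
    exact (((List.perm_append_comm).append_left x).append_right y)
  · intro H
    have K : ∀ x y u v : List A, L (x ++ (u ++ v) ++ y) = L (x ++ (v ++ u) ++ y) := by
      intro x y u v
      have hsu : Function.support (fun w => if w = u then (1:ℝ) else 0)
          ⊆ (({u} : Finset (List A)) : Set (List A)) := by
        simp only [Finset.coe_singleton]; exact dirac_supp u
      have hsv : Function.support (fun w => if w = v then (1:ℝ) else 0)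
          ⊆ (({v} : Finset (List A)) : Set (List A)) := by
        simp only [Finset.coe_singleton]; exact dirac_supp v
      have := H _ _ (dirac_fin u) (dirac_fin v) x y
      rw [ctx_conv L _ _ {u} {v} hsu hsv, ctx_conv L _ _ {v} {u} hsv hsu] at this
      simpa using this
    intro v w hvw
    have gen : ∀ v w : List A, v.Perm w → ∀ x y, L (x ++ v ++ y) = L (x ++ w ++ y) := by
      intro v w h
      induction h with
      | nil => intro x y; rfl
      | cons a h ih =>
          intro x y
          have := ih (x ++ [a]) y
          simpa using this
      | swap a b l =>
          intro x y
          have := K x (l ++ y) [b] [a]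
          simpa using this
      | trans h1 h2 ih1 ih2 =>
          intro x y
          exact (ih1 x y).trans (ih2 x y)
    simpa using gen v w hvw [] []
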